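/- Let D ≥ 2, let m_p, m_q > 0, and let B : ℝ_{≥0} × [−1,1] → ℝ_{≥0} be measurable. Let f, g : ℝ^D → ℝ be nonnegative measurable functions such that both (v, v_*, σ) ↦ B(|v − v_*|, ĝ·σ) f(v) g(v_*) and (v, v_*, σ) ↦ B(|v − v_*|, ĝ·σ) f(v') g(v'_*) are integrable over ℝ^D × ℝ^D × S^{D−1}, where ĝ = (v − v_*)/|v − v_*|, v' = (m_p v + m_q v_* + m_q|v − v_*|σ)/(m_p + m_q), v'_* = (m_p v + m_q v_* − m_p|v − v_*|σ)/(m_p + m_q). Then the multispecies Boltzmann collision operator Q_{p,q}[f,g](v) = ∫∫ B(|v − v_*|, ĝ·σ)·(f(v')g(v'_*) − f(v)g(v_*)) dv_* dσ satisfies ∫_{ℝ^D} Q_{p,q}[f,g](v) dv = 0; that is, each species' mass is conserved by interspecies collisions. -/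

import Mathlib

open MeasureTheory

/-- The surface measure on the unit sphere in `ℝ^D`. -/
noncomputable def sphereMeasure (D : ℕ) :
    Measure (Metric.sphere (0 : EuclideanSpace ℝ (Fin D)) 1) :=
  (volume : Measure (EuclideanSpace ℝ (Fin D))).toSphere

/-- Post-collisional velocity `v'` in the multispecies parametrization. -/
noncomputable def vPrime (D : ℕ) (mp mq : ℝ) (v vs : EuclideanSpace ℝ (Fin D))
    (σ : Metric.sphere (0 : EuclideanSpace ℝ (Fin D)) 1) : EuclideanSpace ℝ (Fin D) :=
  (mp + mq)⁻¹ • (mp • v + mq • vs + (mq * ‖v - vs‖) • (σ : EuclideanSpace ℝ (Fin D)))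

/-- Post-collisional velocity `v'_*` in the multispecies parametrization. -/
noncomputable def vsPrime (D : ℕ) (mp mq : ℝ) (v vs : EuclideanSpace ℝ (Fin D))
    (σ : Metric.sphere (0 : EuclideanSpace ℝ (Fin D)) 1) : EuclideanSpace ℝ (Fin D) :=
  (mp + mq)⁻¹ • (mp • v + mq • vs - (mp * ‖v - vs‖) • (σ : EuclideanSpace ℝ (Fin D)))

/-- The deviation angle cosine `cos θ = ĝ ⬝ σ`, with `ĝ = (v − v_*)/|v − v_*|`. -/
noncomputable def cosDev (D : ℕ) (v vs : EuclideanSpace ℝ (Fin D))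
    (σ : Metric.sphere (0 : EuclideanSpace ℝ (Fin D)) 1) : ℝ :=
  inner ℝ (‖v - vs‖⁻¹ • (v - vs)) (σ : EuclideanSpace ℝ (Fin D))


open Metric Set Module

private lemma polar_measurePreserving (D : ℕ) (hD : 1 ≤ D) :
    MeasurePreserving (fun x : sphere (0 : EuclideanSpace ℝ (Fin D)) 1 × Ioi (0:ℝ) =>
      (x.2 : ℝ) • (x.1 : EuclideanSpace ℝ (Fin D)))
      ((volume : Measure (EuclideanSpace ℝ (Fin D))).toSphere.prod
        (Measure.volumeIoiPow (finrank ℝ (EuclideanSpace ℝ (Fin D)) - 1)))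
      volume := by
  haveI : Nonempty (Fin D) := ⟨⟨0, hD⟩⟩
  haveI : Nontrivial (EuclideanSpace ℝ (Fin D)) := inferInstance
  set μ : Measure (EuclideanSpace ℝ (Fin D)) := volume
  have h1 : MeasurePreserving ((homeomorphUnitSphereProd (EuclideanSpace ℝ (Fin D))).toMeasurableEquiv)
      (μ.comap (↑)) (μ.toSphere.prod (Measure.volumeIoiPow (finrank ℝ (EuclideanSpace ℝ (Fin D)) - 1))) :=
    μ.measurePreserving_homeomorphUnitSphereProd
  have h2 := h1.symm _
  have hval : MeasurePreserving ((↑) : ({0}ᶜ : Set (EuclideanSpace ℝ (Fin D))) → EuclideanSpace ℝ (Fin D))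
      (μ.comap (↑)) μ := by
    refine ⟨measurable_subtype_coe, ?_⟩
    rw [(MeasurableEmbedding.subtype_coe (measurableSet_singleton
      (0 : EuclideanSpace ℝ (Fin D))).compl).map_comap, Subtype.range_coe,
      restrict_compl_singleton]
  exact hval.comp h2

private lemma shear_measurePreserving (D : ℕ) (a b : ℝ) (hab : a + b = 1) :
    MeasurePreserving (fun p : EuclideanSpace ℝ (Fin D) × EuclideanSpace ℝ (Fin D) =>
      (p.1 + b • p.2, p.1 - a • p.2)) (volume.prod volume) (volume.prod volume) := by
  set μ : Measure (EuclideanSpace ℝ (Fin D)) := volume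
  have hA : MeasurePreserving (fun p : EuclideanSpace ℝ (Fin D) × EuclideanSpace ℝ (Fin D) =>
      (p.1, p.2 + b • p.1)) (μ.prod μ) (μ.prod μ) :=
    (MeasurePreserving.id μ).skew_product
      (measurable_snd.add (measurable_fst.const_smul b))
      (Filter.Eventually.of_forall fun x => map_add_right_eq_self μ (b • x))
  have hLa : MeasurePreserving (fun p : EuclideanSpace ℝ (Fin D) × EuclideanSpace ℝ (Fin D) =>
      (p.1 + b • p.2, p.2)) (μ.prod μ) (μ.prod μ) :=
    Measure.measurePreserving_swap.comp (hA.comp Measure.measurePreserving_swap)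
  have hLb : MeasurePreserving (fun p : EuclideanSpace ℝ (Fin D) × EuclideanSpace ℝ (Fin D) =>
      (p.1, p.1 - p.2)) (μ.prod μ) (μ.prod μ) :=
    (MeasurePreserving.id μ).skew_product
      (measurable_fst.sub measurable_snd)
      (Filter.Eventually.of_forall fun x => (Measure.measurePreserving_sub_left μ x).map_eq)
  have h := hLb.comp hLa
  have heq : ((fun p : EuclideanSpace ℝ (Fin D) × EuclideanSpace ℝ (Fin D) => (p.1, p.1 - p.2)) ∘
      (fun p : EuclideanSpace ℝ (Fin D) × EuclideanSpace ℝ (Fin D) => (p.1 + b • p.2, p.2))) =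
      fun p : EuclideanSpace ℝ (Fin D) × EuclideanSpace ℝ (Fin D) =>
        (p.1 + b • p.2, p.1 - a • p.2) := by
    funext p
    show (p.1 + b • p.2, p.1 + b • p.2 - p.2) = (p.1 + b • p.2, p.1 - a • p.2)
    have : p.1 + b • p.2 - p.2 = p.1 - a • p.2 := by match_scalars <;> linarith
    rw [this]
  rwa [heq] at h

private lemma point_eq (D : ℕ) (mp mq a b : ℝ) (hMne : mp + mq ≠ 0)
    (hab : a + b = 1) (hpq : mp * b = mq * a) (haM : (mp + mq) * a = mp) (hbM : (mp + mq) * b = mq)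
    (u : EuclideanSpace ℝ (Fin D)) (s σ : Metric.sphere (0 : EuclideanSpace ℝ (Fin D)) 1)
    (r : Ioi (0:ℝ)) :
    ‖(u + b • ((r:ℝ) • (s : EuclideanSpace ℝ (Fin D)))) -
        (u - a • ((r:ℝ) • (s : EuclideanSpace ℝ (Fin D))))‖ = (r:ℝ) ∧
    cosDev D (u + b • ((r:ℝ) • (s : EuclideanSpace ℝ (Fin D))))
        (u - a • ((r:ℝ) • (s : EuclideanSpace ℝ (Fin D)))) σ
      = inner ℝ (s : EuclideanSpace ℝ (Fin D)) (σ : EuclideanSpace ℝ (Fin D)) ∧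
    vPrime D mp mq (u + b • ((r:ℝ) • (s : EuclideanSpace ℝ (Fin D))))
        (u - a • ((r:ℝ) • (s : EuclideanSpace ℝ (Fin D)))) σ
      = u + b • ((r:ℝ) • (σ : EuclideanSpace ℝ (Fin D))) ∧
    vsPrime D mp mq (u + b • ((r:ℝ) • (s : EuclideanSpace ℝ (Fin D))))
        (u - a • ((r:ℝ) • (s : EuclideanSpace ℝ (Fin D)))) σ
      = u - a • ((r:ℝ) • (σ : EuclideanSpace ℝ (Fin D))) := by
  have hr : (0:ℝ) < r := r.2
  have hrne : (r:ℝ) ≠ 0 := ne_of_gt hr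
  set x : EuclideanSpace ℝ (Fin D) := (r:ℝ) • (s : EuclideanSpace ℝ (Fin D)) with hx
  have hdiff : (u + b • x) - (u - a • x) = x := by
    calc (u + b • x) - (u - a • x) = (a + b) • x := by module
    _ = x := by rw [hab, one_smul]
  have hnorm : ‖(u + b • x) - (u - a • x)‖ = (r:ℝ) := by
    rw [hdiff, hx, norm_smul, norm_eq_of_mem_sphere, Real.norm_eq_abs, abs_of_pos hr, mul_one]
  refine ⟨hnorm, ?_, ?_, ?_⟩
  · rw [cosDev, hdiff, hx, norm_smul, norm_eq_of_mem_sphere, Real.norm_eq_abs, abs_of_pos hr,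
      mul_one, smul_smul, inv_mul_cancel₀ hrne, one_smul]
  · rw [vPrime, hnorm, inv_smul_eq_iff₀ hMne, hx]
    match_scalars
    · linear_combination
    · linear_combination (r:ℝ) * hpq
    · linear_combination (-(r:ℝ)) * hbM
  · rw [vsPrime, hnorm, inv_smul_eq_iff₀ hMne, hx]
    match_scalars
    · linear_combination
    · linear_combination (r:ℝ) * hpq
    · linear_combination (r:ℝ) * haM


/-- Mass conservation for the multispecies Boltzmann collision operator:
`∫ Q_{p,q}[f,g](v) dv = 0`, i.e. the constant function `1` is a collision
invariant of each interspecies collision operator. -/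
theorem multispecies_boltzmann_mass_conservation
    (D : ℕ) (hD : 2 ≤ D) (mp mq : ℝ) (hmp : 0 < mp) (hmq : 0 < mq)
    (B : ℝ → ℝ → ℝ) (hB_meas : Measurable (Function.uncurry B))
    (hB_nonneg : ∀ x y, 0 ≤ B x y)
    (f g : EuclideanSpace ℝ (Fin D) → ℝ)
    (hf_meas : Measurable f) (hg_meas : Measurable g)
    (hf_nonneg : ∀ v, 0 ≤ f v) (hg_nonneg : ∀ v, 0 ≤ g v)
    (hint_pre : Integrable
      (fun w : EuclideanSpace ℝ (Fin D) × EuclideanSpace ℝ (Fin D) ×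
          Metric.sphere (0 : EuclideanSpace ℝ (Fin D)) 1 =>
        B ‖w.1 - w.2.1‖ (cosDev D w.1 w.2.1 w.2.2) * (f w.1 * g w.2.1))
      (volume.prod (volume.prod (sphereMeasure D))))
    (hint_post : Integrable
      (fun w : EuclideanSpace ℝ (Fin D) × EuclideanSpace ℝ (Fin D) ×
          Metric.sphere (0 : EuclideanSpace ℝ (Fin D)) 1 =>
        B ‖w.1 - w.2.1‖ (cosDev D w.1 w.2.1 w.2.2)
          * (f (vPrime D mp mq w.1 w.2.1 w.2.2) * g (vsPrime D mp mq w.1 w.2.1 w.2.2)))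
      (volume.prod (volume.prod (sphereMeasure D)))) :
    (∫ v, ∫ vs, ∫ σ : Metric.sphere (0 : EuclideanSpace ℝ (Fin D)) 1,
        B ‖v - vs‖ (cosDev D v vs σ)
          * (f (vPrime D mp mq v vs σ) * g (vsPrime D mp mq v vs σ) - f v * g vs)
      ∂(sphereMeasure D)) = 0 := by
  have hM : (0:ℝ) < mp + mq := by linarith
  have hMne : mp + mq ≠ 0 := ne_of_gt hM
  haveI : Nonempty (Fin D) := ⟨⟨0, by omega⟩⟩
  haveI : Nontrivial (EuclideanSpace ℝ (Fin D)) := inferInstance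
  set a : ℝ := mp / (mp + mq) with ha
  set b : ℝ := mq / (mp + mq) with hb
  have hab : a + b = 1 := by rw [ha, hb]; field_simp
  have hpq : mp * b = mq * a := by rw [ha, hb]; field_simp
  have haM : (mp + mq) * a = mp := by rw [ha]; field_simp
  have hbM : (mp + mq) * b = mq := by rw [hb]; field_simp
  rw [show sphereMeasure D = (volume : Measure (EuclideanSpace ℝ (Fin D))).toSphere from rfl]
    at hint_pre hint_post ⊢
  set Fpre : EuclideanSpace ℝ (Fin D) × EuclideanSpace ℝ (Fin D) ×
      Metric.sphere (0 : EuclideanSpace ℝ (Fin D)) 1 → ℝ :=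
    (fun w => B ‖w.1 - w.2.1‖ (cosDev D w.1 w.2.1 w.2.2) * (f w.1 * g w.2.1)) with hFpre
  set Fpost : EuclideanSpace ℝ (Fin D) × EuclideanSpace ℝ (Fin D) ×
      Metric.sphere (0 : EuclideanSpace ℝ (Fin D)) 1 → ℝ :=
    (fun w => B ‖w.1 - w.2.1‖ (cosDev D w.1 w.2.1 w.2.2)
      * (f (vPrime D mp mq w.1 w.2.1 w.2.2) * g (vsPrime D mp mq w.1 w.2.1 w.2.2))) with hFpost
  have hP : MeasurePreserving
      (fun x : Metric.sphere (0 : EuclideanSpace ℝ (Fin D)) 1 × Set.Ioi (0:ℝ) =>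
        (x.2 : ℝ) • (x.1 : EuclideanSpace ℝ (Fin D)))
      (((volume : Measure (EuclideanSpace ℝ (Fin D))).toSphere).prod
        (Measure.volumeIoiPow (Module.finrank ℝ (EuclideanSpace ℝ (Fin D)) - 1)))
      volume := polar_measurePreserving D (by omega)
  have hL : MeasurePreserving
      (fun p : EuclideanSpace ℝ (Fin D) × EuclideanSpace ℝ (Fin D) =>
        (p.1 + b • p.2, p.1 - a • p.2)) (volume.prod volume) (volume.prod volume) :=
    shear_measurePreserving D a b hab
  -- the measure spaces
  set NU := (volume : Measure (EuclideanSpace ℝ (Fin D))).toSphere with hNU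
  set RHO := Measure.volumeIoiPow (Module.finrank ℝ (EuclideanSpace ℝ (Fin D)) - 1) with hRHO
  haveI : SFinite NU := by rw [hNU]; infer_instance
  haveI : SFinite RHO := by rw [hRHO]; infer_instance
  have hMid : MeasurePreserving
      (Prod.map (id : EuclideanSpace ℝ (Fin D) → EuclideanSpace ℝ (Fin D))
        (Prod.map (fun x : Metric.sphere (0 : EuclideanSpace ℝ (Fin D)) 1 × Set.Ioi (0:ℝ) =>
          (x.2 : ℝ) • (x.1 : EuclideanSpace ℝ (Fin D)))
          (id : Metric.sphere (0 : EuclideanSpace ℝ (Fin D)) 1 →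
            Metric.sphere (0 : EuclideanSpace ℝ (Fin D)) 1)))
      (volume.prod ((NU.prod RHO).prod NU)) (volume.prod (volume.prod NU)) :=
    (MeasurePreserving.id volume).prod (hP.prod (MeasurePreserving.id NU))
  have hassoc := measurePreserving_prodAssoc (volume : Measure (EuclideanSpace ℝ (Fin D)))
    (volume : Measure (EuclideanSpace ℝ (Fin D))) NU
  have hassocSymm := hassoc.symm _
  have hΨ : MeasurePreserving
      (fun z : EuclideanSpace ℝ (Fin D) ×
          ((Metric.sphere (0 : EuclideanSpace ℝ (Fin D)) 1 × Set.Ioi (0:ℝ)) ×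
            Metric.sphere (0 : EuclideanSpace ℝ (Fin D)) 1) =>
        (z.1 + b • ((z.2.1.2 : ℝ) • (z.2.1.1 : EuclideanSpace ℝ (Fin D))),
          (z.1 - a • ((z.2.1.2 : ℝ) • (z.2.1.1 : EuclideanSpace ℝ (Fin D))), z.2.2)))
      (volume.prod ((NU.prod RHO).prod NU)) (volume.prod (volume.prod NU)) := by
    have h := hassoc.comp (((hL.prod (MeasurePreserving.id NU))).comp (hassocSymm.comp hMid))
    exact h
  have hW : MeasurePreserving
      (fun z : EuclideanSpace ℝ (Fin D) ×
          ((Metric.sphere (0 : EuclideanSpace ℝ (Fin D)) 1 × Set.Ioi (0:ℝ)) ×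
            Metric.sphere (0 : EuclideanSpace ℝ (Fin D)) 1) =>
        (z.1, ((z.2.2, z.2.1.2), z.2.1.1)))
      (volume.prod ((NU.prod RHO).prod NU)) (volume.prod ((NU.prod RHO).prod NU)) := by
    have hWin : MeasurePreserving
        (fun q : (Metric.sphere (0 : EuclideanSpace ℝ (Fin D)) 1 × Set.Ioi (0:ℝ)) ×
            Metric.sphere (0 : EuclideanSpace ℝ (Fin D)) 1 =>
          ((q.2, q.1.2), q.1.1)) ((NU.prod RHO).prod NU) ((NU.prod RHO).prod NU) := by
      have h := Measure.measurePreserving_swap.comp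
        (((MeasurePreserving.id NU).prod Measure.measurePreserving_swap).comp
          (measurePreserving_prodAssoc NU RHO NU))
      exact h
    exact (MeasurePreserving.id volume).prod hWin
  have key : ∫ z, Fpost z ∂(volume.prod (volume.prod NU))
      = ∫ z, Fpre z ∂(volume.prod (volume.prod NU)) := by
    have hmap0 : AEStronglyMeasurable Fpost ((volume.prod ((NU.prod RHO).prod NU)).map
        (fun z => (z.1 + b • ((z.2.1.2 : ℝ) • (z.2.1.1 : EuclideanSpace ℝ (Fin D))),
          (z.1 - a • ((z.2.1.2 : ℝ) • (z.2.1.1 : EuclideanSpace ℝ (Fin D))), z.2.2)))) := by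
      rw [hΨ.map_eq]; exact hint_post.1
    have hmap1 : AEStronglyMeasurable Fpre ((volume.prod ((NU.prod RHO).prod NU)).map
        (fun z => (z.1 + b • ((z.2.1.2 : ℝ) • (z.2.1.1 : EuclideanSpace ℝ (Fin D))),
          (z.1 - a • ((z.2.1.2 : ℝ) • (z.2.1.1 : EuclideanSpace ℝ (Fin D))), z.2.2)))) := by
      rw [hΨ.map_eq]; exact hint_pre.1
    have e1 : ∫ z, Fpost z ∂(volume.prod (volume.prod NU))
        = ∫ z, Fpost (z.1 + b • ((z.2.1.2 : ℝ) • (z.2.1.1 : EuclideanSpace ℝ (Fin D))),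
            (z.1 - a • ((z.2.1.2 : ℝ) • (z.2.1.1 : EuclideanSpace ℝ (Fin D))), z.2.2))
            ∂(volume.prod ((NU.prod RHO).prod NU)) := by
      conv_lhs => rw [← hΨ.map_eq]
      exact integral_map hΨ.aemeasurable hmap0
    have e2 : ∫ z, Fpre z ∂(volume.prod (volume.prod NU))
        = ∫ z, Fpre (z.1 + b • ((z.2.1.2 : ℝ) • (z.2.1.1 : EuclideanSpace ℝ (Fin D))),
            (z.1 - a • ((z.2.1.2 : ℝ) • (z.2.1.1 : EuclideanSpace ℝ (Fin D))), z.2.2))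
            ∂(volume.prod ((NU.prod RHO).prod NU)) := by
      conv_lhs => rw [← hΨ.map_eq]
      exact integral_map hΨ.aemeasurable hmap1
    have hcompASM : AEStronglyMeasurable
        (fun z : EuclideanSpace ℝ (Fin D) ×
            ((Metric.sphere (0 : EuclideanSpace ℝ (Fin D)) 1 × Set.Ioi (0:ℝ)) ×
              Metric.sphere (0 : EuclideanSpace ℝ (Fin D)) 1) =>
          Fpost (z.1 + b • ((z.2.1.2 : ℝ) • (z.2.1.1 : EuclideanSpace ℝ (Fin D))),
            (z.1 - a • ((z.2.1.2 : ℝ) • (z.2.1.1 : EuclideanSpace ℝ (Fin D))), z.2.2)))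
        ((volume.prod ((NU.prod RHO).prod NU)).map
          (fun z => (z.1, ((z.2.2, z.2.1.2), z.2.1.1)))) := by
      rw [hW.map_eq]
      exact hmap0.comp_aemeasurable hΨ.aemeasurable
    have e3 : ∫ z, Fpost (z.1 + b • ((z.2.1.2 : ℝ) • (z.2.1.1 : EuclideanSpace ℝ (Fin D))),
          (z.1 - a • ((z.2.1.2 : ℝ) • (z.2.1.1 : EuclideanSpace ℝ (Fin D))), z.2.2))
          ∂(volume.prod ((NU.prod RHO).prod NU))
        = ∫ z, Fpost (z.1 + b • ((z.2.1.2 : ℝ) • ((z.2.2 : EuclideanSpace ℝ (Fin D)))),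
            (z.1 - a • ((z.2.1.2 : ℝ) • ((z.2.2 : EuclideanSpace ℝ (Fin D)))), z.2.1.1))
            ∂(volume.prod ((NU.prod RHO).prod NU)) := by
      conv_lhs => rw [← hW.map_eq]
      exact integral_map hW.aemeasurable hcompASM
    have e4 : ∀ z : EuclideanSpace ℝ (Fin D) ×
        ((Metric.sphere (0 : EuclideanSpace ℝ (Fin D)) 1 × Set.Ioi (0:ℝ)) ×
          Metric.sphere (0 : EuclideanSpace ℝ (Fin D)) 1),
        Fpost (z.1 + b • ((z.2.1.2 : ℝ) • ((z.2.2 : EuclideanSpace ℝ (Fin D)))),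
          (z.1 - a • ((z.2.1.2 : ℝ) • ((z.2.2 : EuclideanSpace ℝ (Fin D)))), z.2.1.1))
        = Fpre (z.1 + b • ((z.2.1.2 : ℝ) • (z.2.1.1 : EuclideanSpace ℝ (Fin D))),
            (z.1 - a • ((z.2.1.2 : ℝ) • (z.2.1.1 : EuclideanSpace ℝ (Fin D))), z.2.2)) := by
      rintro ⟨u, ⟨⟨s, r⟩, σ⟩⟩
      obtain ⟨n1, c1, p1, q1⟩ := point_eq D mp mq a b hMne hab hpq haM hbM u σ s r
      obtain ⟨n2, c2, p2, q2⟩ := point_eq D mp mq a b hMne hab hpq haM hbM u s σ r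
      simp only [hFpre, hFpost]
      rw [n1, c1, p1, q1, n2, c2, real_inner_comm]
    have e5 : ∫ z, Fpost (z.1 + b • ((z.2.1.2 : ℝ) • ((z.2.2 : EuclideanSpace ℝ (Fin D)))),
          (z.1 - a • ((z.2.1.2 : ℝ) • ((z.2.2 : EuclideanSpace ℝ (Fin D)))), z.2.1.1))
          ∂(volume.prod ((NU.prod RHO).prod NU))
        = ∫ z, Fpre (z.1 + b • ((z.2.1.2 : ℝ) • (z.2.1.1 : EuclideanSpace ℝ (Fin D))),
            (z.1 - a • ((z.2.1.2 : ℝ) • (z.2.1.1 : EuclideanSpace ℝ (Fin D))), z.2.2))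
            ∂(volume.prod ((NU.prod RHO).prod NU)) :=
      integral_congr_ae (Filter.Eventually.of_forall fun z => e4 z)
    rw [e1, e3, e5, ← e2]
  have hF : Integrable (fun z => Fpost z - Fpre z) (volume.prod (volume.prod NU)) :=
    hint_post.sub hint_pre
  have hzero : ∫ z, (Fpost z - Fpre z) ∂(volume.prod (volume.prod NU)) = 0 := by
    rw [integral_sub hint_post hint_pre, key, sub_self]
  calc (∫ v, ∫ vs, ∫ σ : Metric.sphere (0 : EuclideanSpace ℝ (Fin D)) 1,
        B ‖v - vs‖ (cosDev D v vs σ)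
          * (f (vPrime D mp mq v vs σ) * g (vsPrime D mp mq v vs σ) - f v * g vs) ∂NU)
      = ∫ v, ∫ vs, ∫ σ : Metric.sphere (0 : EuclideanSpace ℝ (Fin D)) 1,
          (Fpost (v, (vs, σ)) - Fpre (v, (vs, σ))) ∂NU := by
        simp only [hFpost, hFpre, mul_sub]
    _ = ∫ z, (Fpost z - Fpre z) ∂(volume.prod (volume.prod NU)) := by
        rw [integral_prod _ hF]
        refine integral_congr_ae ?_
        filter_upwards [hF.prod_right_ae] with v hv
        exact (integral_prod _ hv).symm
    _ = 0 := hzero
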